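/- Lower bound on the l-effective dimension under two-sided polynomial eigenvalue decay: Let (μ_i)_{i≥1} be a nonincreasing sequence of positive reals and let p ∈ (0,1), l ≥ 1. If μ_i ≥ D₁ i^{−1/p} for all i ≥ 1 and some constant D₁ > 0, then for every λ ∈ (0,1], N_l(λ) := Σ_{i≥1} (μ_i/(μ_i+λ))^l ≥ c_{1,l} λ^{−p}, where c_{1,l} = (D₁/(D₁+1))^l · p/(l−p). -/

import Mathlib

open scoped ENNReal
open MeasureTheory Set

/-- Lower bound on the `l`-effective dimension `N_l(λ) = Σ_i (μ_i/(μ_i+λ))^l`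
under the lower polynomial eigenvalue decay `μ_i ≥ D₁ i^{-1/p}` with `p ∈ (0,1)`. -/
theorem effective_dimension_lower_bound
    (μ : ℕ → ℝ) (p l D₁ : ℝ)
    (hp0 : 0 < p) (hp1 : p < 1) (hl : 1 ≤ l)
    (hμpos : ∀ i, 0 < μ i) (hμanti : Antitone μ)
    (hD₁ : 0 < D₁)
    (hEVD : ∀ i : ℕ, D₁ * ((i : ℝ) + 1) ^ (-(1 / p)) ≤ μ i)
    (lam : ℝ) (hlam0 : 0 < lam) (hlam1 : lam ≤ 1) :
    ENNReal.ofReal ((D₁ / (D₁ + 1)) ^ l * (p / (l - p)) * lam ^ (-p))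
      ≤ ∑' i : ℕ, ENNReal.ofReal ((μ i / (μ i + lam)) ^ l) := by
  have hlp : (0:ℝ) < l - p := by linarith
  have hl0 : (0:ℝ) < l := by linarith
  set s : ℝ := l / p with hs
  have hps : p * s = l := by rw [hs]; field_simp
  have hs1 : 1 < s := by rw [hs]; rw [lt_div_iff₀ hp0]; linarith
  set c : ℝ := lam ^ (-p) with hc
  have hc0 : 0 < c := Real.rpow_pos_of_pos hlam0 _
  have hc1 : 1 ≤ c := by
    calc (1:ℝ) = 1 ^ (-p) := (Real.one_rpow _).symm
    _ ≤ lam ^ (-p) := Real.rpow_le_rpow_of_nonpos hlam0 hlam1 (by linarith)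
  set C : ℝ := (D₁ / (D₁ + 1)) ^ l with hC
  have hC0 : 0 < C := Real.rpow_pos_of_pos (by positivity) _
  set K : ℝ := C * lam ^ (-l) with hK
  have hK0 : 0 < K := by
    have := Real.rpow_pos_of_pos hlam0 (-l); positivity
  set H : ℝ → ℝ≥0∞ :=
    (Set.Ioi c).indicator (fun x => ENNReal.ofReal (K * x ^ (-s))) with hH
  -- pointwise key inequality
  have key : ∀ n : ℕ, ∀ x : ℝ, (n:ℝ) + 1 ≤ x → x ∈ Set.Ioi c →
      K * x ^ (-s) ≤ (μ n / (μ n + lam)) ^ l := by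
    intro n x hnx hx
    have hx0 : 0 < x := lt_trans hc0 hx
    set y : ℝ := x ^ (1/p) with hy
    have hy0 : 0 < y := Real.rpow_pos_of_pos hx0 _
    have h1 : 1 ≤ lam * y := by
      have hcy : c ^ (1/p) ≤ y := Real.rpow_le_rpow hc0.le (le_of_lt hx) (by positivity)
      have hcp : c ^ (1/p) = lam⁻¹ := by
        rw [hc, ← Real.rpow_mul hlam0.le]
        rw [show -p * (1/p) = -1 by field_simp]
        exact Real.rpow_neg_one lam
      have : lam⁻¹ ≤ y := by rwa [hcp] at hcy
      calc (1:ℝ) = lam * lam⁻¹ := (mul_inv_cancel₀ hlam0.ne').symm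
      _ ≤ lam * y := by gcongr
    have heq : K * x ^ (-s) = (D₁ / ((D₁ + 1) * (lam * y))) ^ l := by
      have hb : D₁ / ((D₁ + 1) * (lam * y)) = D₁ / (D₁ + 1) / lam / y := by
        rw [div_div, div_div]
      have hyl : y ^ l = x ^ s := by
        rw [hy, ← Real.rpow_mul hx0.le]
        congr 1
        rw [hs]; ring
      rw [hb, Real.div_rpow (by positivity) hy0.le,
        Real.div_rpow (by positivity) hlam0.le, hyl, hK, hC,
        Real.rpow_neg hlam0.le, Real.rpow_neg hx0.le]
      ring
    rw [heq]
    apply Real.rpow_le_rpow (by positivity) _ hl0.le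
    have hμn : D₁ ≤ μ n * y := by
      have h2 : x ^ (-(1/p)) ≤ ((n:ℝ) + 1) ^ (-(1/p)) :=
        Real.rpow_le_rpow_of_nonpos (by positivity) hnx (by
          have : 0 < 1/p := by positivity
          linarith)
      have h3 : D₁ * x ^ (-(1/p)) ≤ μ n :=
        le_trans (mul_le_mul_of_nonneg_left h2 hD₁.le) (hEVD n)
      have h4 : x ^ (-(1/p)) = y⁻¹ := by rw [hy, Real.rpow_neg hx0.le]
      rw [h4] at h3
      calc D₁ = D₁ * y⁻¹ * y := by field_simp
      _ ≤ μ n * y := by gcongr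
    calc D₁ / ((D₁ + 1) * (lam * y)) ≤ D₁ / (D₁ + lam * y) := by
          rw [div_le_div_iff₀ (by positivity) (by positivity)]
          nlinarith [mul_le_mul_of_nonneg_left h1 (mul_nonneg hD₁.le hD₁.le)]
    _ ≤ μ n / (μ n + lam) := by
          have hμ0 := hμpos n
          rw [div_le_div_iff₀ (by positivity) (by positivity)]
          nlinarith [mul_le_mul_of_nonneg_left hμn hlam0.le]
  -- step A: integral over each Ioc piece is at most the corresponding term
  have stepA : ∀ n : ℕ,
      ∫⁻ x in Set.Ioc ((n:ℝ) + 1) ((n:ℝ) + 2), H x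
        ≤ ENNReal.ofReal ((μ n / (μ n + lam)) ^ l) := by
    intro n
    have hb : ∀ x ∈ Set.Ioc ((n:ℝ) + 1) ((n:ℝ) + 2),
        H x ≤ ENNReal.ofReal ((μ n / (μ n + lam)) ^ l) := by
      intro x hx
      by_cases hxc : x ∈ Set.Ioi c
      · rw [hH, Set.indicator_of_mem hxc]
        exact ENNReal.ofReal_le_ofReal (key n x hx.1.le hxc)
      · rw [hH, Set.indicator_of_notMem hxc]; exact zero_le
    calc ∫⁻ x in Set.Ioc ((n:ℝ) + 1) ((n:ℝ) + 2), H x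
        ≤ ∫⁻ _ in Set.Ioc ((n:ℝ) + 1) ((n:ℝ) + 2),
            ENNReal.ofReal ((μ n / (μ n + lam)) ^ l) :=
          setLIntegral_mono' measurableSet_Ioc hb
      _ = ENNReal.ofReal ((μ n / (μ n + lam)) ^ l) := by
          rw [setLIntegral_const, Real.volume_Ioc]
          norm_num
  -- the union of the pieces is Ioi 1
  have hUnion : (⋃ n : ℕ, Set.Ioc ((n:ℝ) + 1) ((n:ℝ) + 2)) = Set.Ioi 1 := by
    ext x
    simp only [Set.mem_iUnion, Set.mem_Ioc, Set.mem_Ioi]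
    constructor
    · rintro ⟨n, h1, _⟩
      have : (0:ℝ) ≤ n := Nat.cast_nonneg n
      linarith
    · intro hx
      have hx1 : 0 < x - 1 := by linarith
      have hceil1 : 1 ≤ ⌈x - 1⌉₊ := Nat.one_le_ceil_iff.mpr hx1
      refine ⟨⌈x - 1⌉₊ - 1, ?_, ?_⟩
      · have hcast : ((⌈x - 1⌉₊ - 1 : ℕ) : ℝ) = (⌈x - 1⌉₊ : ℝ) - 1 := by
          push_cast [hceil1]; ring
        rw [hcast]
        have := Nat.ceil_lt_add_one hx1.le
        linarith
      · have hcast : ((⌈x - 1⌉₊ - 1 : ℕ) : ℝ) = (⌈x - 1⌉₊ : ℝ) - 1 := by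
          push_cast [hceil1]; ring
        rw [hcast]
        have := Nat.le_ceil (x - 1)
        linarith
  -- disjointness of the pieces
  have hdisj : Pairwise (Function.onFun Disjoint
      fun n : ℕ => Set.Ioc ((n:ℝ) + 1) ((n:ℝ) + 2)) := by
    have key2 : ∀ m n : ℕ, m < n →
        Disjoint (Set.Ioc ((m:ℝ) + 1) ((m:ℝ) + 2)) (Set.Ioc ((n:ℝ) + 1) ((n:ℝ) + 2)) := by
      intro m n hmn
      rw [Set.Ioc_disjoint_Ioc]
      have : (m:ℝ) + 1 ≤ n := by
        have : (m:ℝ) + 1 ≤ (n:ℝ) := by exact_mod_cast hmn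
        linarith
      calc min ((m:ℝ) + 2) ((n:ℝ) + 2) ≤ (m:ℝ) + 2 := min_le_left _ _
      _ ≤ (n:ℝ) + 1 := by linarith
      _ ≤ max ((m:ℝ) + 1) ((n:ℝ) + 1) := le_max_right _ _
    intro m n hmn
    rcases lt_or_gt_of_ne hmn with h | h
    · exact key2 m n h
    · exact (key2 n m h).symm
  -- decompose the integral over Ioi 1 into the sum
  have hsum : ∫⁻ x in Set.Ioi (1:ℝ), H x
      = ∑' n : ℕ, ∫⁻ x in Set.Ioc ((n:ℝ) + 1) ((n:ℝ) + 2), H x := by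
    rw [← hUnion, lintegral_iUnion (fun n => measurableSet_Ioc) hdisj]
  -- the indicator integral equals the integral over Ioi c
  have hind : ∫⁻ x in Set.Ioi (1:ℝ), H x
      = ∫⁻ x in Set.Ioi c, ENNReal.ofReal (K * x ^ (-s)) := by
    rw [hH, lintegral_indicator measurableSet_Ioi,
      Measure.restrict_restrict measurableSet_Ioi, Set.Ioi_inter_Ioi,
      sup_eq_left.mpr hc1]
  -- compute the integral over Ioi c
  have hsneg : (-s) < -1 := by linarith
  have hInt : IntegrableOn (fun x : ℝ => K * x ^ (-s)) (Set.Ioi c) :=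
    (integrableOn_Ioi_rpow_of_lt hsneg hc0).const_mul K
  have hD : ∫⁻ x in Set.Ioi c, ENNReal.ofReal (K * x ^ (-s))
      = ENNReal.ofReal (K * (-c ^ (-s + 1) / (-s + 1))) := by
    rw [← MeasureTheory.ofReal_integral_eq_lintegral_ofReal hInt ?_]
    · rw [MeasureTheory.integral_const_mul, integral_Ioi_rpow_of_lt hsneg hc0]
    · filter_upwards [ae_restrict_mem measurableSet_Ioi] with x hx
      have hx0 : 0 < x := lt_trans hc0 hx
      positivity
  -- arithmetic identification of the constant
  have h1 : c ^ (-s + 1) = lam ^ (l - p) := by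
    rw [hc, ← Real.rpow_mul hlam0.le]
    congr 1
    linear_combination hps
  have h2 : lam ^ (-l) * lam ^ (l - p) = lam ^ (-p) := by
    rw [← Real.rpow_add hlam0, show -l + (l - p) = -p by ring]
  have harith : K * (-c ^ (-s + 1) / (-s + 1)) = C * (p / (l - p)) * lam ^ (-p) := by
    rw [h1, hK, ← h2]
    have h3 : -1 / (-s + 1) = p / (l - p) := by
      have hns : -s + 1 = -((l - p) / p) := by rw [hs]; field_simp; ring
      rw [hns, div_neg, neg_div, neg_neg, one_div, inv_div]
    calc C * lam ^ (-l) * (-lam ^ (l - p) / (-s + 1))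
        = -1 / (-s + 1) * (C * (lam ^ (-l) * lam ^ (l - p))) := by ring
      _ = C * (p / (l - p)) * (lam ^ (-l) * lam ^ (l - p)) := by rw [h3]; ring
  calc ENNReal.ofReal ((D₁ / (D₁ + 1)) ^ l * (p / (l - p)) * lam ^ (-p))
      = ∫⁻ x in Set.Ioi c, ENNReal.ofReal (K * x ^ (-s)) := by
        rw [hD, harith, hC]
    _ = ∫⁻ x in Set.Ioi (1:ℝ), H x := hind.symm
    _ = ∑' n : ℕ, ∫⁻ x in Set.Ioc ((n:ℝ) + 1) ((n:ℝ) + 2), H x := hsum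
    _ ≤ ∑' i : ℕ, ENNReal.ofReal ((μ i / (μ i + lam)) ^ l) :=
        ENNReal.tsum_le_tsum stepA
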